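/- Let m ≥ 3, let P be a symmetric 2-index array on ℝ^m and let v ∈ ℝ^m. Then the array D(P,v) is antisymmetric in its last two indices (D(P,v)_{ijk} = −D(P,v)_{ikj} for all i,j,k), all of its traces vanish (Σ_i D(P,v)_{iik} = 0 and Σ_j D(P,v)_{ijj} = 0 and Σ_i D(P,v)_{iji} = 0 for all remaining free indices), and its contraction with v in the first slot satisfies Σ_i v_i D(P,v)_{ijk} = (1/(m−1))·( v_k·Σ_l v_l P_{lj} − v_j·Σ_l v_l P_{lk} ) for all j, k. -/
import Mathlib


/-- The Kronecker delta on `Fin m`, regarded as a real 2-index array. -/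
def kdelta (m : ℕ) (i j : Fin m) : ℝ := if i = j then 1 else 0

/-- The 3-index array `D(P,v)` associated with a 2-index array `P` and a vector `v`:
`D(P,v)_{ijk} = (1/(m−2))·[ v_k P_{ij} − v_j P_{ik}
  + (1/(m−1))·Σ_l v_l (P_{lk}δ_{ij} − P_{lj}δ_{ik})
  − ((Σ_l P_{ll})/(m−1))·(v_kδ_{ij} − v_jδ_{ik}) ]`. -/
noncomputable def Dt (m : ℕ) (P : Fin m → Fin m → ℝ) (v : Fin m → ℝ)
    (i j k : Fin m) : ℝ :=
  (1 / ((m : ℝ) - 2)) *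
    (v k * P i j - v j * P i k
      + (1 / ((m : ℝ) - 1)) * ∑ l, v l * (P l k * kdelta m i j - P l j * kdelta m i k)
      - ((∑ l, P l l) / ((m : ℝ) - 1)) * (v k * kdelta m i j - v j * kdelta m i k))

lemma kdelta_self (m : ℕ) (i : Fin m) : kdelta m i i = 1 := by simp [kdelta]

lemma sum_delta_mul (m : ℕ) (f : Fin m → ℝ) (k : Fin m) :
    ∑ i, f i * kdelta m i k = f k := by
  simp [kdelta, mul_ite]

lemma Dt_eq (m : ℕ) (P : Fin m → Fin m → ℝ) (v : Fin m → ℝ) (i j k : Fin m) :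
    Dt m P v i j k =
      (1 / ((m : ℝ) - 2)) *
        (v k * P i j - v j * P i k
          + (1 / ((m : ℝ) - 1)) *
              ((∑ l, v l * P l k) * kdelta m i j - (∑ l, v l * P l j) * kdelta m i k)
          - ((∑ l, P l l) / ((m : ℝ) - 1)) * (v k * kdelta m i j - v j * kdelta m i k)) := by
  unfold Dt
  rw [show (∑ l, v l * (P l k * kdelta m i j - P l j * kdelta m i k)) =
      (∑ l, v l * P l k) * kdelta m i j - (∑ l, v l * P l j) * kdelta m i k by
    rw [Finset.sum_congr rfl fun l (_ : l ∈ Finset.univ) =>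
      show v l * (P l k * kdelta m i j - P l j * kdelta m i k)
          = v l * P l k * kdelta m i j - v l * P l j * kdelta m i k by ring]
    rw [Finset.sum_sub_distrib, ← Finset.sum_mul, ← Finset.sum_mul]]

/-- `D(P,v)` is antisymmetric in its last two indices, all of its traces vanish, and
its contraction with `v` in the first slot is
`Σ_i v_i D(P,v)_{ijk} = (1/(m−1))·(v_k Σ_l v_l P_{lj} − v_j Σ_l v_l P_{lk})`. -/
theorem Dt_symmetries (m : ℕ) (hm : 3 ≤ m) (P : Fin m → Fin m → ℝ)
    (hP : ∀ i j, P i j = P j i) (v : Fin m → ℝ) :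
    (∀ i j k, Dt m P v i j k = - Dt m P v i k j) ∧
    (∀ k, (∑ i, Dt m P v i i k) = 0) ∧
    (∀ i, (∑ j, Dt m P v i j j) = 0) ∧
    (∀ j, (∑ i, Dt m P v i j i) = 0) ∧
    (∀ j k, (∑ i, v i * Dt m P v i j k) =
      (1 / ((m : ℝ) - 1)) * (v k * (∑ l, v l * P l j) - v j * ∑ l, v l * P l k)) := by
  have hm3 : (3 : ℝ) ≤ (m : ℝ) := by exact_mod_cast hm
  have hm1 : (m : ℝ) - 1 ≠ 0 := by linarith
  have hm2 : (m : ℝ) - 2 ≠ 0 := by linarith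
  set c : ℝ := 1 / ((m : ℝ) - 2) with hc
  set S : Fin m → ℝ := fun x => ∑ l, v l * P l x with hS
  set T : ℝ := ∑ l, P l l with hT
  have hSx : ∀ x, (∑ l, v l * P l x) = S x := fun _ => rfl
  refine ⟨fun i j k => by rw [Dt_eq, Dt_eq]; ring, ?_, ?_, ?_, ?_⟩
  · intro k
    have h : ∀ i, Dt m P v i i k =
        c * v k * P i i - c * (v i * P i k)
          + (c * (1 / ((m : ℝ) - 1)) * S k - c * (T / ((m : ℝ) - 1)) * v k)
          + (c * (T / ((m : ℝ) - 1)) * v i - c * (1 / ((m : ℝ) - 1)) * S i) * kdelta m i k := by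
      intro i; rw [Dt_eq, kdelta_self]; ring
    rw [Finset.sum_congr rfl fun i _ => h i]
    rw [Finset.sum_add_distrib, Finset.sum_add_distrib, Finset.sum_sub_distrib,
        sum_delta_mul, ← Finset.mul_sum, ← Finset.mul_sum, Finset.sum_const,
        Finset.card_univ, Fintype.card_fin, nsmul_eq_mul]
    rw [← hT]
    simp only [hSx]
    field_simp
    ring
  · intro i
    refine Finset.sum_eq_zero fun j _ => ?_
    rw [Dt_eq]; ring
  · intro j
    have h : ∀ i, Dt m P v i j i =
        c * (v i * P i j)
          + (- c * v j) * P i i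
          + (- c * (1 / ((m : ℝ) - 1)) * S j + c * (T / ((m : ℝ) - 1)) * v j)
          + (c * (1 / ((m : ℝ) - 1)) * S i - c * (T / ((m : ℝ) - 1)) * v i) * kdelta m i j := by
      intro i; rw [Dt_eq, kdelta_self]; ring
    rw [Finset.sum_congr rfl fun i _ => h i]
    rw [Finset.sum_add_distrib, Finset.sum_add_distrib, Finset.sum_add_distrib,
        sum_delta_mul, ← Finset.mul_sum, ← Finset.mul_sum, Finset.sum_const,
        Finset.card_univ, Fintype.card_fin, nsmul_eq_mul]
    rw [← hT]
    simp only [hSx]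
    field_simp
    ring
  · intro j k
    have h : ∀ i, v i * Dt m P v i j k =
        (c * v k * (v i * P i j) - c * v j * (v i * P i k))
          + ((c * (1 / ((m : ℝ) - 1)) * S k - c * (T / ((m : ℝ) - 1)) * v k) * v i) * kdelta m i j
          + ((c * (T / ((m : ℝ) - 1)) * v j - c * (1 / ((m : ℝ) - 1)) * S j) * v i) * kdelta m i k := by
      intro i; rw [Dt_eq]; ring
    rw [Finset.sum_congr rfl fun i _ => h i]
    rw [Finset.sum_add_distrib, Finset.sum_add_distrib, Finset.sum_sub_distrib,
        sum_delta_mul, sum_delta_mul, ← Finset.mul_sum, ← Finset.mul_sum]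
    simp only [hSx]
    rw [hc]
    rw [div_mul_eq_mul_div, div_mul_eq_mul_div]
    field_simp
    ring
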